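/- Let M be a real symmetric positive definite m×m matrix with k_m I ⪯ M ⪯ k_M I for constants 0 < k_m ≤ k_M, and let M̂ = (2/(k_m^{-1} + k_M^{-1})) I. Then the operator norm satisfies ‖M^{-1} M̂ − I‖ ≤ ε, where ε = (k_m^{-1} − k_M^{-1})/(k_m^{-1} + k_M^{-1}). -/

import Mathlib

open Matrix
open scoped Matrix.Norms.L2Operator

private lemma normsq_eq_dot (k : ℕ) (w : Fin k → ℝ) :
    ‖(WithLp.equiv 2 (Fin k → ℝ)).symm w‖ ^ 2 = w ⬝ᵥ w := by
  rw [EuclideanSpace.norm_eq, Real.sq_sqrt (by positivity)]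
  simp [dotProduct, Real.norm_eq_abs, sq_abs, pow_two]

theorem stmt_11 (m : ℕ) (M : Matrix (Fin m) (Fin m) ℝ)
    (hsymm : M.IsSymm) (hPD : M.PosDef)
    (km kM : ℝ) (hkm : 0 < km) (hkmM : km ≤ kM)
    (hlow : (M - km • (1 : Matrix (Fin m) (Fin m) ℝ)).PosSemidef)
    (hupp : ((kM • (1 : Matrix (Fin m) (Fin m) ℝ)) - M).PosSemidef)
    (Mhat : Matrix (Fin m) (Fin m) ℝ)
    (hMhat : Mhat = (2 / (km⁻¹ + kM⁻¹)) • (1 : Matrix (Fin m) (Fin m) ℝ)) :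
    ‖M⁻¹ * Mhat - 1‖ ≤ (km⁻¹ - kM⁻¹) / (km⁻¹ + kM⁻¹) := by
  have hkM : 0 < kM := lt_of_lt_of_le hkm hkmM
  set s : ℝ := km⁻¹ + kM⁻¹ with hs
  have hs0 : 0 < s := by positivity
  set c : ℝ := 2 / s with hc
  have hc0 : 0 < c := by positivity
  set ε : ℝ := (km⁻¹ - kM⁻¹) / s with he
  have hε0 : 0 ≤ ε := by
    apply div_nonneg _ hs0.le
    simp only [sub_nonneg]
    exact inv_anti₀ hkm hkmM
  have hH : M.IsHermitian := hPD.1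
  set U : Matrix (Fin m) (Fin m) ℝ := (hH.eigenvectorUnitary : Matrix (Fin m) (Fin m) ℝ) with hUdef
  set μ : Fin m → ℝ := hH.eigenvalues with hμ
  have hU1 : star U * U = 1 := Unitary.coe_star_mul_self hH.eigenvectorUnitary
  have hU2 : U * star U = 1 := Unitary.coe_mul_star_self hH.eigenvectorUnitary
  have hspec : M = U * diagonal μ * star U := by simpa using hH.spectral_theorem
  -- eigenvalue bounds
  have hbound : ∀ i, km ≤ μ i ∧ μ i ≤ kM := by
    intro i
    set v : Fin m → ℝ := ⇑(hH.eigenvectorBasis i) with hv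
    have hvv : v ⬝ᵥ v = 1 := by
      have h1 := hH.eigenvectorBasis.orthonormal.1 i
      have h2 : ‖hH.eigenvectorBasis i‖ ^ 2 = v ⬝ᵥ v := by
        rw [EuclideanSpace.norm_eq, Real.sq_sqrt (by positivity)]
        simp [dotProduct, Real.norm_eq_abs, sq_abs, pow_two, hv]
      rw [h1] at h2
      simpa using h2.symm
    have hmv : M *ᵥ v = μ i • v := hH.mulVec_eigenvectorBasis i
    constructor
    · have := hlow.dotProduct_mulVec_nonneg v
      rw [sub_mulVec, hmv, smul_mulVec, one_mulVec] at this
      simp only [star_trivial, ← sub_smul, dotProduct_smul, smul_eq_mul, hvv, mul_one] at this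
      linarith
    · have := hupp.dotProduct_mulVec_nonneg v
      rw [sub_mulVec, hmv, smul_mulVec, one_mulVec] at this
      simp only [star_trivial, ← sub_smul, dotProduct_smul, smul_eq_mul, hvv, mul_one] at this
      linarith
  have hμpos : ∀ i, 0 < μ i := fun i => lt_of_lt_of_le hkm (hbound i).1
  set g : Fin m → ℝ := fun i => c / μ i - 1 with hg
  set X : Matrix (Fin m) (Fin m) ℝ := U * diagonal g * star U with hX
  have hMinv : M⁻¹ * M = 1 := nonsing_inv_mul M ((isUnit_iff_isUnit_det M).mp hPD.isUnit)
  have diag_sub : ∀ (a b : Fin m → ℝ),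
      diagonal a - diagonal b = diagonal (fun i => a i - b i) := by
    intro a b
    ext i j
    rcases eq_or_ne i j with rfl | hij
    · simp
    · simp [diagonal_apply_ne _ hij, hij]
  -- key conjugation multiplication
  have key : ∀ D E : Matrix (Fin m) (Fin m) ℝ,
      (U * D * star U) * (U * E * star U) = U * (D * E) * star U := by
    intro D E
    have h1 : star U * (U * (E * star U)) = E * star U := by
      rw [← Matrix.mul_assoc, hU1, Matrix.one_mul]
    simp only [Matrix.mul_assoc, h1]
  have hdiagmul : diagonal μ * diagonal g = c • (1 : Matrix (Fin m) (Fin m) ℝ) - diagonal μ := by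
    rw [diagonal_mul_diagonal, smul_one_eq_diagonal]
    simp only [diag_sub]
    refine congrArg diagonal (funext fun i => ?_)
    have hne : μ i ≠ 0 := (hμpos i).ne'
    show μ i * (c / μ i - 1) = c - μ i
    field_simp
  have hMX : M * X = c • (1 : Matrix (Fin m) (Fin m) ℝ) - M := by
    rw [hspec, hX, key, hdiagmul, Matrix.mul_sub, Matrix.sub_mul, Matrix.mul_smul,
      Matrix.mul_one, Matrix.smul_mul, hU2, ← hspec]
  have hXA : M⁻¹ * Mhat - 1 = X := by
    have h1 : M * (X + 1) = c • (1 : Matrix (Fin m) (Fin m) ℝ) := by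
      rw [Matrix.mul_add, Matrix.mul_one, hMX, sub_add_cancel]
    have h2 : X + 1 = M⁻¹ * (c • (1 : Matrix (Fin m) (Fin m) ℝ)) := by
      calc X + 1 = (M⁻¹ * M) * (X + 1) := by rw [hMinv, Matrix.one_mul]
        _ = M⁻¹ * (M * (X + 1)) := by rw [Matrix.mul_assoc]
        _ = M⁻¹ * (c • (1 : Matrix (Fin m) (Fin m) ℝ)) := by rw [h1]
    rw [hMhat, ← h2, add_sub_cancel_right]
  -- bounds on g
  have hg_up : ∀ i, g i ≤ ε := by
    intro i
    have h1 : c / μ i ≤ c / km := div_le_div_of_nonneg_left hc0.le hkm (hbound i).1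
    have h2 : c / km = 1 + ε := by
      rw [hc, he, hs]
      have h3 : km⁻¹ + kM⁻¹ ≠ 0 := by positivity
      field_simp
      ring
    simp only [hg]
    linarith
  have hg_lo : ∀ i, -ε ≤ g i := by
    intro i
    have h1 : c / kM ≤ c / μ i := div_le_div_of_nonneg_left hc0.le (hμpos i) (hbound i).2
    have h2 : c / kM = 1 - ε := by
      rw [hc, he, hs]
      have h3 : km⁻¹ + kM⁻¹ ≠ 0 := by positivity
      field_simp
      ring
    simp only [hg]
    linarith
  have hdg : ∀ i, (0:ℝ) ≤ ε ^ 2 - g i * g i := by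
    intro i
    have h1 := sq_le_sq' (hg_lo i) (hg_up i)
    have h2 : g i ^ 2 = g i * g i := sq (g i)
    linarith
  have hBpsd : (U * diagonal (fun i => ε ^ 2 - g i * g i) * star U).PosSemidef := by
    have h := (Matrix.PosSemidef.diagonal (R := ℝ) (d := fun i => ε ^ 2 - g i * g i)
      (fun i => hdg i)).mul_mul_conjTranspose_same U
    simpa [Matrix.star_eq_conjTranspose] using h
  have hB : (ε ^ 2) • (1 : Matrix (Fin m) (Fin m) ℝ) - X * X
      = U * diagonal (fun i => ε ^ 2 - g i * g i) * star U := by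
    have h1 : X * X = U * diagonal (fun i => g i * g i) * star U := by
      rw [hX, key, diagonal_mul_diagonal]
    have h2 : (ε ^ 2) • (1 : Matrix (Fin m) (Fin m) ℝ)
        = U * diagonal (fun _ => ε ^ 2) * star U := by
      rw [smul_one_eq_diagonal]
      calc diagonal (fun _ : Fin m => ε ^ 2)
          = U * (star U * diagonal (fun _ : Fin m => ε ^ 2)) := by
            rw [← Matrix.mul_assoc, hU2, Matrix.one_mul]
        _ = U * (diagonal (fun _ : Fin m => ε ^ 2) * star U) := by
            rw [← smul_one_eq_diagonal, Matrix.mul_smul, Matrix.smul_mul,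
              Matrix.mul_one, Matrix.one_mul]
        _ = U * diagonal (fun _ : Fin m => ε ^ 2) * star U := by rw [Matrix.mul_assoc]
    rw [h1, h2, ← Matrix.sub_mul, ← Matrix.mul_sub]
    simp only [diag_sub]
  have hXsymm : Xᵀ = X := by
    have hherm : Xᴴ = X := by
      rw [hX]
      simp only [conjTranspose_mul, conjTranspose_conjTranspose, star_eq_conjTranspose,
        diagonal_conjTranspose, star_trivial, Matrix.mul_assoc]
    have hTc : Xᵀ = Xᴴ := by
      ext i j; simp [conjTranspose_apply]
    rw [hTc, hherm]
  -- final norm bound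
  rw [hXA, Matrix.l2_opNorm_def]
  refine ContinuousLinearMap.opNorm_le_bound _ hε0 fun x => ?_
  simp only [LinearEquiv.trans_apply, LinearMap.coe_toContinuousLinearMap']
  rw [toEuclideanLin_apply]
  set x' : Fin m → ℝ := (WithLp.equiv 2 (Fin m → ℝ)) x with hx'
  have hxn : ‖x‖ ^ 2 = x' ⬝ᵥ x' := by
    have h := normsq_eq_dot m x'
    rwa [hx', Equiv.symm_apply_apply] at h
  refine le_of_pow_le_pow_left₀ two_ne_zero (by positivity) ?_
  rw [mul_pow, show ‖WithLp.toLp 2 (X *ᵥ x.ofLp)‖ ^ 2 = (X *ᵥ x') ⬝ᵥ (X *ᵥ x') from normsq_eq_dot m (X *ᵥ x'), hxn]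
  -- w ⬝ᵥ w ≤ ε^2 * (x' ⬝ᵥ x') where w = X *ᵥ x'
  have hvm : x' ᵥ* X = X *ᵥ x' := by
    nth_rewrite 1 [← hXsymm]
    rw [Matrix.vecMul_transpose]
  have hww : x' ⬝ᵥ ((X * X) *ᵥ x') = (X *ᵥ x') ⬝ᵥ (X *ᵥ x') := by
    rw [← Matrix.mulVec_mulVec, Matrix.dotProduct_mulVec x', hvm]
  have hpsd := hBpsd.dotProduct_mulVec_nonneg x'
  rw [← hB] at hpsd
  rw [sub_mulVec, smul_mulVec, one_mulVec, star_trivial,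
    dotProduct_sub, dotProduct_smul, smul_eq_mul] at hpsd
  linarith [hpsd, hww]
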